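/- arXiv:2110.15334 — 2 statements merged into one kernel-verified Lean document; each statement's English description precedes it below -/
import Mathlib

section
/- Let A0 ∈ ℂ^{n×n} and let λ_1,…,λ_n be its eigenvalues listed with algebraic multiplicity (the roots of the characteristic polynomial). There exist constants K, ε > 0 depending on A0 only and an ordering of λ_1,…,λ_n such that for every A ∈ ℂ^{n×n} with ‖A − A0‖ < ε there is an ordering μ_1,…,μ_n of the eigenvalues of A listed with algebraic multiplicity satisfying |μ_j − λ_j| ≤ K ‖A − A0‖^{1/n} for every j = 1,…,n. -/
open scoped Matrix

/-- Operator norm on `n × n` complex matrices induced by the Euclidean norm on `ℂ^n`. -/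
noncomputable def opNorm {n : ℕ} (A : Matrix (Fin n) (Fin n) ℂ) : ℝ :=
  ‖(Matrix.toEuclideanCLM (𝕜 := ℂ) A : EuclideanSpace ℂ (Fin n) →L[ℂ] EuclideanSpace ℂ (Fin n))‖

/-- `A = U * T * Uᴴ` is a Schur factorization: `U` unitary, `T` upper triangular. -/
def IsSchurTriple {n : ℕ} (A U T : Matrix (Fin n) (Fin n) ℂ) : Prop :=
  U ∈ Matrix.unitaryGroup (Fin n) ℂ ∧ T.BlockTriangular id ∧ A = U * T * Uᴴ

/-- `dim ker (A - μ I)^j`. -/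
noncomputable def kerDim {n : ℕ} (A : Matrix (Fin n) (Fin n) ℂ) (μ : ℂ) (j : ℕ) : ℕ :=
  Module.finrank ℂ (LinearMap.ker (Matrix.toLin' ((A - μ • 1) ^ j)))

/-- `m_i(A, μ)`, the `i`-th largest Jordan block size of `A` at `μ`:
the number of `j ≥ 1` with `dim ker (A-μ)^j - dim ker (A-μ)^{j-1} ≥ i`
(all such `j` lie in `[1, n]`). -/
noncomputable def gkLocal {n : ℕ} (A : Matrix (Fin n) (Fin n) ℂ) (μ : ℂ) (i : ℕ) : ℕ :=
  ((Finset.Icc 1 n).filter (fun j => i ≤ kerDim A μ j - kerDim A μ (j - 1))).card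

/-- The Gohberg–Kaashoek numbers `m_i(A) = Σ_{λ ∈ σ(A)} m_i(A, λ)`. -/
noncomputable def gkNumber {n : ℕ} (A : Matrix (Fin n) (Fin n) ℂ) (i : ℕ) : ℕ :=
  ∑ μ ∈ A.charpoly.roots.toFinset, gkLocal A μ i

/-- `A` and `A0` have the same Jordan structure: a bijection `φ : σ(A0) → σ(A)` with
`dim ker (A - φ(λ))^k = dim ker (A0 - λ)^k` for all `λ ∈ σ(A0)`, `k ≥ 1`. -/
def SameJordanStructure {n : ℕ} (A A0 : Matrix (Fin n) (Fin n) ℂ) : Prop :=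
  ∃ φ : ℂ → ℂ, Set.BijOn φ (spectrum ℂ A0) (spectrum ℂ A) ∧
    ∀ μ ∈ spectrum ℂ A0, ∀ k : ℕ, 1 ≤ k → kerDim A (φ μ) k = kerDim A0 μ k

/-- `A` is non-derogatory: each eigenvalue has a one-dimensional eigenspace. -/
def NonDerogatory {n : ℕ} (A : Matrix (Fin n) (Fin n) ℂ) : Prop :=
  ∀ μ ∈ spectrum ℂ A, Module.finrank ℂ (LinearMap.ker (Matrix.toLin' (A - μ • 1))) = 1

/-- Orthogonal projection of `ℂ^n` onto the subspace `M`, as a map `ℂ^n → ℂ^n`. -/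
noncomputable def projCLM {n : ℕ} (M : Submodule ℂ (EuclideanSpace ℂ (Fin n))) :
    EuclideanSpace ℂ (Fin n) →L[ℂ] EuclideanSpace ℂ (Fin n) :=
  M.subtypeL.comp (M.orthogonalProjectionOnto)

/-- The gap `θ(M, N) = ‖P_M - P_N‖`. -/
noncomputable def gap {n : ℕ} (M N : Submodule ℂ (EuclideanSpace ℂ (Fin n))) : ℝ :=
  ‖projCLM M - projCLM N‖

/-- The semigap `θ₀(M, N) = sup_{x ∈ M, ‖x‖ = 1} inf_{y ∈ N} ‖x - y‖` (equal to `0` if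
`M = {0}`, since `sSup ∅ = 0` in `ℝ`). -/
noncomputable def semigap {n : ℕ} (M N : Submodule ℂ (EuclideanSpace ℂ (Fin n))) : ℝ :=
  sSup ((fun x => Metric.infDist x (N : Set (EuclideanSpace ℂ (Fin n)))) ''
    {x : EuclideanSpace ℂ (Fin n) | x ∈ M ∧ ‖x‖ = 1})

open Polynomial Matrix Finset Filter

set_option maxHeartbeats 1000000

lemma entry_le_opNorm {n : ℕ} (A : Matrix (Fin n) (Fin n) ℂ) (i j : Fin n) :
    ‖A i j‖ ≤ opNorm A := by
  classical
  set f := Matrix.toEuclideanCLM (𝕜 := ℂ) A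
  have h1 : f ((WithLp.equiv 2 _).symm (Pi.single j 1)) =
      (WithLp.equiv 2 _).symm (A *ᵥ Pi.single j 1) :=
    Matrix.toEuclideanCLM_toLp A _
  have hv : ‖((WithLp.equiv 2 _).symm (Pi.single j (1:ℂ)) : EuclideanSpace ℂ (Fin n))‖ = 1 := by
    simpa using EuclideanSpace.norm_single (𝕜 := ℂ) j 1
  have h2 : ‖f ((WithLp.equiv 2 _).symm (Pi.single j 1))‖ ≤ ‖f‖ := by
    calc ‖f ((WithLp.equiv 2 _).symm (Pi.single j 1))‖ ≤ ‖f‖ * ‖((WithLp.equiv 2 _).symm (Pi.single j (1:ℂ)) : EuclideanSpace ℂ (Fin n))‖ := f.le_opNorm _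
    _ = ‖f‖ := by rw [hv, mul_one]
  rw [h1] at h2
  have h3 : ‖(A *ᵥ Pi.single j 1) i‖ ≤ ‖((WithLp.equiv 2 _).symm (A *ᵥ Pi.single j 1) : EuclideanSpace ℂ (Fin n))‖ := by
    rw [EuclideanSpace.norm_eq]
    have : ‖(A *ᵥ Pi.single j 1) i‖ = Real.sqrt (‖(A *ᵥ Pi.single j 1) i‖^2) := by
      rw [Real.sqrt_sq (norm_nonneg _)]
    rw [this]
    apply Real.sqrt_le_sqrt
    have := Finset.single_le_sum (f := fun k => ‖(A *ᵥ Pi.single j 1) k‖^2) (fun k _ => by positivity) (Finset.mem_univ i)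
    simpa using this
  have h4 : (A *ᵥ Pi.single j 1) i = A i j := by
    simp [Matrix.mulVec_single]
  rw [h4] at h3
  exact h3.trans h2

lemma charpoly_eval {n : ℕ} (A : Matrix (Fin n) (Fin n) ℂ) (x : ℂ) :
    A.charpoly.eval x = (x • (1 : Matrix (Fin n) (Fin n) ℂ) - A).det := by
  rw [Matrix.charpoly, _root_.eval_det, Matrix.matPolyEquiv_charmatrix]
  congr 1
  simp only [eval_sub, eval_X, eval_C, Matrix.scalar_apply]
  congr 1
  rw [Matrix.smul_one_eq_diagonal]

lemma root_bound {n : ℕ} (A : Matrix (Fin n) (Fin n) ℂ) {μ : ℂ}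
    (h : μ ∈ A.charpoly.roots) : ‖μ‖ ≤ opNorm A := by
  have hn : n ≠ 0 := by
    rintro rfl
    have h1 : A.charpoly = 1 := by
      have := Matrix.charpoly_natDegree_eq_dim A
      simp only [Fintype.card_fin] at this
      exact (Polynomial.Monic.natDegree_eq_zero (Matrix.charpoly_monic A)).mp this
    rw [h1] at h
    simp at h
  haveI : NeZero n := ⟨hn⟩
  have hroot : A.charpoly.IsRoot μ := Polynomial.isRoot_of_mem_roots h
  have hdet : (μ • (1 : Matrix (Fin n) (Fin n) ℂ) - A).det = 0 := by
    rw [← charpoly_eval]; exact hroot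
  have hspec : μ ∈ spectrum ℂ A := by
    rw [spectrum.mem_iff]
    intro hu
    rw [Algebra.algebraMap_eq_smul_one] at hu
    have := (Matrix.isUnit_iff_isUnit_det _).mp hu
    rw [hdet] at this
    simp at this
  have hspec2 : μ ∈ spectrum ℂ (Matrix.toEuclideanCLM (𝕜 := ℂ) A) := by
    rwa [AlgEquiv.spectrum_eq (Matrix.toEuclideanCLM (𝕜 := ℂ) (n := Fin n)) A]
  have := spectrum.norm_le_norm_of_mem hspec2
  simpa [opNorm] using this

lemma det_norm_le {n : ℕ} (M : Fin n → Fin n → ℂ) :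
    ‖Matrix.det (Matrix.of M)‖ ≤ (n.factorial : ℝ) * ∏ i, ‖M i‖ := by
  rw [Matrix.det_apply]
  calc ‖∑ σ : Equiv.Perm (Fin n), Equiv.Perm.sign σ • ∏ i, Matrix.of M (σ i) i‖
      ≤ ∑ σ : Equiv.Perm (Fin n), ‖Equiv.Perm.sign σ • ∏ i, Matrix.of M (σ i) i‖ :=
        norm_sum_le _ _
    _ ≤ ∑ σ : Equiv.Perm (Fin n), ∏ i, ‖M i‖ := by
        apply Finset.sum_le_sum
        intro σ _
        have h1 : ‖Equiv.Perm.sign σ • ∏ i, Matrix.of M (σ i) i‖ = ‖∏ i, M (σ i) i‖ := by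
          rcases Int.units_eq_one_or (Equiv.Perm.sign σ) with h | h <;>
            simp [h, Units.smul_def, Matrix.of_apply]
        rw [h1, norm_prod]
        calc ∏ i, ‖M (σ i) i‖ ≤ ∏ i, ‖M (σ i)‖ := by
              apply Finset.prod_le_prod (fun _ _ => norm_nonneg _)
              intro i _
              exact norm_le_pi_norm (M (σ i)) i
          _ = ∏ i, ‖M i‖ := Equiv.prod_comp σ (fun r => ‖M r‖)
    _ = (n.factorial : ℝ) * ∏ i, ‖M i‖ := by
        rw [Finset.sum_const, Finset.card_univ, Fintype.card_perm, nsmul_eq_mul]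
        simp [Fintype.card_fin]

noncomputable def detML (n : ℕ) : MultilinearMap ℂ (fun _ : Fin n => (Fin n → ℂ)) ℂ :=
  (Matrix.detRowAlternating : ((Fin n → ℂ) [⋀^Fin n]→ₗ[ℂ] ℂ)).toMultilinearMap

lemma detML_apply {n : ℕ} (M : Fin n → Fin n → ℂ) : detML n M = Matrix.det (Matrix.of M) := rfl

lemma det_sub_bound {n : ℕ} (M₁ M₂ : Fin n → Fin n → ℂ) :
    ‖Matrix.det (Matrix.of M₁) - Matrix.det (Matrix.of M₂)‖ ≤
      (n.factorial : ℝ) * n * max ‖M₁‖ ‖M₂‖ ^ (n - 1) * ‖M₁ - M₂‖ := by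
  have h := (detML n).norm_image_sub_le_of_bound (C := (n.factorial : ℝ))
    (by positivity) (fun m => by rw [detML_apply]; exact det_norm_le m) M₁ M₂
  simpa [detML_apply, Fintype.card_fin] using h

lemma exists_enum {β : Type*} {n : ℕ} (s : Multiset β) (h : Multiset.card s = n) :
    ∃ f : Fin n → β, Multiset.map f Finset.univ.val = s := by
  induction s using Quotient.ind with
  | _ l =>
    change Multiset.card (l : Multiset β) = n at h
    change ∃ f : Fin n → β, Multiset.map f Finset.univ.val = (l : Multiset β)
    subst h
    refine ⟨fun i => l.get (Fin.cast (by simp) i), ?_⟩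
    have : Finset.univ.val = (⟦List.finRange (Multiset.card (l : Multiset β))⟧ : Multiset _) := rfl
    rw [this]
    show (⟦(List.finRange _).map _⟧ : Multiset β) = _
    rw [← List.ofFn_eq_map]
    congr 1
    have := List.ofFn_get l
    conv_rhs => rw [← this]
    apply List.ofFn_congr (by simp)

lemma perm_of_map_univ_eq {β : Type*} : ∀ {n : ℕ} (f g : Fin n → β),
    Multiset.map f Finset.univ.val = Multiset.map g Finset.univ.val →
    ∃ σ : Equiv.Perm (Fin n), ∀ i, f i = g (σ i) := by
  intro n
  induction n with
  | zero => intro f g _; exact ⟨1, fun i => i.elim0⟩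
  | succ m ih =>
    intro f g h
    have hmem : f 0 ∈ Multiset.map g Finset.univ.val := by
      rw [← h]
      exact Multiset.mem_map.mpr ⟨0, Finset.mem_univ_val _, rfl⟩
    obtain ⟨j, -, hj⟩ := Multiset.mem_map.mp hmem
    -- g' := g ∘ swap 0 j
    set g' : Fin (m+1) → β := fun i => g (Equiv.swap 0 j i) with hg'
    have hg'univ : Multiset.map g' Finset.univ.val = Multiset.map g Finset.univ.val := by
      have : Multiset.map g' Finset.univ.val =
          Multiset.map g (Multiset.map (⇑(Equiv.swap 0 j)) Finset.univ.val) := by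
        rw [Multiset.map_map]; rfl
      rw [this, Multiset.map_univ_val_equiv]
    have h0 : f 0 = g' 0 := by simp [hg', hj]
    have huniv : (Finset.univ.val : Multiset (Fin (m+1))) =
        0 ::ₘ Multiset.map Fin.succ Finset.univ.val := by
      rw [Fin.univ_succ, Finset.cons_val, Finset.map_val]
      rfl
    have htail : Multiset.map (fun i => f (Fin.succ i)) Finset.univ.val =
        Multiset.map (fun i => g' (Fin.succ i)) Finset.univ.val := by
      have h1 : Multiset.map f Finset.univ.val = f 0 ::ₘ Multiset.map (fun i => f (Fin.succ i)) Finset.univ.val := by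
        rw [huniv, Multiset.map_cons, Multiset.map_map]; rfl
      have h2 : Multiset.map g' Finset.univ.val = g' 0 ::ₘ Multiset.map (fun i => g' (Fin.succ i)) Finset.univ.val := by
        rw [huniv, Multiset.map_cons, Multiset.map_map]; rfl
      have := h.trans hg'univ.symm
      rw [h1, h2, ← h0] at this
      exact (Multiset.cons_inj_right _).mp this
    obtain ⟨σ', hσ'⟩ := ih (fun i => f (Fin.succ i)) (fun i => g' (Fin.succ i)) htail
    refine ⟨Equiv.Perm.decomposeFin.symm (j, σ'), ?_⟩
    intro i
    induction i using Fin.cases with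
    | zero => rw [Equiv.Perm.decomposeFin_symm_apply_zero]; exact hj.symm
    | succ i =>
      rw [Equiv.Perm.decomposeFin_symm_apply_succ]
      exact hσ' i

lemma charpoly_card_roots {n : ℕ} (A : Matrix (Fin n) (Fin n) ℂ) :
    Multiset.card A.charpoly.roots = n := by
  have hs : Splits A.charpoly := IsAlgClosed.splits _
  rw [Polynomial.splits_iff_card_roots.mp hs, Matrix.charpoly_natDegree_eq_dim,
    Fintype.card_fin]

lemma charpoly_eq_prod {n : ℕ} (A : Matrix (Fin n) (Fin n) ℂ) (f : Fin n → ℂ)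
    (h : Multiset.map f Finset.univ.val = A.charpoly.roots) :
    A.charpoly = ∏ i, (X - C (f i)) := by
  have hs : Splits A.charpoly := IsAlgClosed.splits _
  have := hs.eq_prod_roots_of_monic (Matrix.charpoly_monic A)
  rw [this, ← h, Multiset.map_map]
  rw [Finset.prod_eq_multiset_prod]
  rfl

lemma charpoly_eval_prod {n : ℕ} (A : Matrix (Fin n) (Fin n) ℂ) (f : Fin n → ℂ)
    (h : Multiset.map f Finset.univ.val = A.charpoly.roots) (x : ℂ) :
    A.charpoly.eval x = ∏ i, (x - f i) := by
  rw [charpoly_eq_prod A f h, Polynomial.eval_prod]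
  simp

lemma opNorm_nonneg' {n : ℕ} (A : Matrix (Fin n) (Fin n) ℂ) : 0 ≤ opNorm A := norm_nonneg _

lemma opNorm_sub_comm {n : ℕ} (A B : Matrix (Fin n) (Fin n) ℂ) :
    opNorm (A - B) = opNorm (B - A) := by
  unfold opNorm
  rw [← norm_neg, ← map_neg, neg_sub]

lemma smul_one_sub_entry_bound {n : ℕ} (x : ℂ) (A : Matrix (Fin n) (Fin n) ℂ) (i j : Fin n) :
    ‖(x • (1 : Matrix (Fin n) (Fin n) ℂ) - A) i j‖ ≤ ‖x‖ + opNorm A := by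
  have h1 : (x • (1 : Matrix (Fin n) (Fin n) ℂ) - A) i j = x * (1 : Matrix (Fin n) (Fin n) ℂ) i j - A i j := by
    simp [Matrix.sub_apply, Matrix.smul_apply, smul_eq_mul]
  rw [h1]
  calc ‖x * (1 : Matrix (Fin n) (Fin n) ℂ) i j - A i j‖
      ≤ ‖x * (1 : Matrix (Fin n) (Fin n) ℂ) i j‖ + ‖A i j‖ := by
        exact (norm_sub_le _ _)
    _ ≤ ‖x‖ + opNorm A := by
        apply add_le_add _ (entry_le_opNorm A i j)
        rw [norm_mul]
        calc ‖x‖ * ‖(1 : Matrix (Fin n) (Fin n) ℂ) i j‖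
            ≤ ‖x‖ * 1 := by
              apply mul_le_mul_of_nonneg_left _ (norm_nonneg x)
              rw [Matrix.one_apply]
              split_ifs <;> simp
          _ = ‖x‖ := mul_one _

lemma pi_matrix_norm_le {n : ℕ} (M : Fin n → Fin n → ℂ) {c : ℝ} (hc : 0 ≤ c)
    (h : ∀ i j, ‖M i j‖ ≤ c) : ‖M‖ ≤ c := by
  rw [pi_norm_le_iff_of_nonneg hc]
  intro i
  rw [pi_norm_le_iff_of_nonneg hc]
  intro j
  simpa using h i j

lemma eval_charpoly_lip {n : ℕ} (x : ℂ) (A A' : Matrix (Fin n) (Fin n) ℂ) {C : ℝ}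
    (hA : ‖x‖ + opNorm A ≤ C) (hA' : ‖x‖ + opNorm A' ≤ C) :
    ‖A.charpoly.eval x - A'.charpoly.eval x‖ ≤
      (n.factorial : ℝ) * n * C ^ (n - 1) * opNorm (A - A') := by
  have hC : 0 ≤ C := le_trans (add_nonneg (norm_nonneg _) (opNorm_nonneg' _)) hA
  set M₁ : Fin n → Fin n → ℂ := fun i j => (x • (1 : Matrix (Fin n) (Fin n) ℂ) - A) i j with hM₁
  set M₂ : Fin n → Fin n → ℂ := fun i j => (x • (1 : Matrix (Fin n) (Fin n) ℂ) - A') i j with hM₂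
  have e1 : A.charpoly.eval x = Matrix.det (Matrix.of M₁) := by
    rw [charpoly_eval]; rfl
  have e2 : A'.charpoly.eval x = Matrix.det (Matrix.of M₂) := by
    rw [charpoly_eval]; rfl
  have hb := det_sub_bound M₁ M₂
  have hM₁le : ‖M₁‖ ≤ C := pi_matrix_norm_le _ hC
    (fun i j => le_trans (smul_one_sub_entry_bound x A i j) hA)
  have hM₂le : ‖M₂‖ ≤ C := pi_matrix_norm_le _ hC
    (fun i j => le_trans (smul_one_sub_entry_bound x A' i j) hA')
  have hdiff : ‖M₁ - M₂‖ ≤ opNorm (A - A') := by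
    apply pi_matrix_norm_le _ (opNorm_nonneg' _)
    intro i j
    have : (M₁ - M₂) i j = (A' - A) i j := by
      simp only [hM₁, hM₂, Pi.sub_apply, Matrix.sub_apply]
      ring
    show ‖(M₁ - M₂) i j‖ ≤ _
    rw [this, opNorm_sub_comm]
    exact entry_le_opNorm _ i j
  rw [e1, e2]
  calc ‖Matrix.det (Matrix.of M₁) - Matrix.det (Matrix.of M₂)‖
      ≤ (n.factorial : ℝ) * n * max ‖M₁‖ ‖M₂‖ ^ (n - 1) * ‖M₁ - M₂‖ := hb
    _ ≤ (n.factorial : ℝ) * n * C ^ (n - 1) * opNorm (A - A') := by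
        apply mul_le_mul
        · apply mul_le_mul_of_nonneg_left _ (by positivity)
          exact pow_le_pow_left₀ (le_max_iff.mpr (Or.inl (norm_nonneg _))) (max_le hM₁le hM₂le) _
        · exact hdiff
        · exact norm_nonneg _
        · positivity

lemma opNorm_triangle {n : ℕ} (A B : Matrix (Fin n) (Fin n) ℂ) :
    opNorm A ≤ opNorm B + opNorm (A - B) := by
  unfold opNorm
  calc ‖(Matrix.toEuclideanCLM (𝕜 := ℂ) A : EuclideanSpace ℂ (Fin n) →L[ℂ] _)‖
      = ‖(Matrix.toEuclideanCLM (𝕜 := ℂ) B : EuclideanSpace ℂ (Fin n) →L[ℂ] _) +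
        (Matrix.toEuclideanCLM (𝕜 := ℂ) (A - B) : EuclideanSpace ℂ (Fin n) →L[ℂ] _)‖ := by
        rw [← map_add]
        congr 1
        rw [add_comm, sub_add_cancel]
    _ ≤ _ := norm_add_le _ _


lemma qualitative {n : ℕ} (A0 : Matrix (Fin n) (Fin n) ℂ) (lam : Fin n → ℂ)
    (hlam : Multiset.map lam Finset.univ.val = A0.charpoly.roots) {r : ℝ} (hr : 0 < r) :
    ∃ δ > (0:ℝ), ∀ A : Matrix (Fin n) (Fin n) ℂ, opNorm (A - A0) < δ →
      ∃ mu : Fin n → ℂ, Multiset.map mu Finset.univ.val = A.charpoly.roots ∧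
        ∀ j, ‖mu j - lam j‖ ≤ r := by
  by_contra hcon
  push_neg at hcon
  -- extract counterexample sequence
  have hseq : ∀ k : ℕ, ∃ A : Matrix (Fin n) (Fin n) ℂ, opNorm (A - A0) < 1/(k+1) ∧
      ∀ mu : Fin n → ℂ, Multiset.map mu Finset.univ.val = A.charpoly.roots →
        ∃ j, r < ‖mu j - lam j‖ := by
    intro k
    obtain ⟨A, hA1, hA2⟩ := hcon (1/(k+1)) (by positivity)
    refine ⟨A, hA1, ?_⟩
    intro mu hmu
    obtain ⟨j, hj⟩ := hA2 mu hmu  -- maybe shape differs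
    exact ⟨j, hj⟩
  choose A hAclose hAfail using hseq
  have hAk_norm : ∀ k, opNorm (A k) ≤ opNorm A0 + 1 := by
    intro k
    refine le_trans (opNorm_triangle (A k) A0) ?_
    have : opNorm (A k - A0) ≤ 1 := le_trans (hAclose k).le (by
      rw [div_le_one (by positivity)]; push_cast; linarith)
    linarith
  choose z hz using fun k => exists_enum (A k).charpoly.roots (charpoly_card_roots (A k))
  set CB : ℝ := opNorm A0 + 1 with hCB
  have hCBpos : 0 ≤ CB := by have := opNorm_nonneg' A0; simp [hCB]; linarith
  have hzball : ∀ k, z k ∈ Metric.closedBall (0 : Fin n → ℂ) CB := by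
    intro k
    rw [Metric.mem_closedBall, dist_zero_right]
    rw [pi_norm_le_iff_of_nonneg hCBpos]
    intro i
    have hmem : z k i ∈ (A k).charpoly.roots := by
      rw [← hz k]
      exact Multiset.mem_map.mpr ⟨i, Finset.mem_univ_val _, rfl⟩
    have := root_bound (A k) hmem
    exact le_trans this (hAk_norm k)
  obtain ⟨w, -, φ, hφmono, hφtend⟩ := tendsto_subseq_of_bounded
    (Metric.isBounded_closedBall (x := (0 : Fin n → ℂ)) (r := CB)) hzball
  -- opNorm (A (φ k) - A0) → 0
  have hAφ : Tendsto (fun k => opNorm (A (φ k) - A0)) atTop (nhds 0) := by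
    have hb : ∀ k : ℕ, opNorm (A (φ k) - A0) ≤ 1/(k+1) := by
      intro k
      refine le_trans (hAclose (φ k)).le ?_
      apply div_le_div_of_nonneg_left (by norm_num) (by positivity)
      have : (k:ℝ) ≤ (φ k : ℝ) := by exact_mod_cast hφmono.le_apply
      linarith
    exact squeeze_zero (fun k => opNorm_nonneg' _) hb tendsto_one_div_add_atTop_nhds_zero_nat
  -- the limit w enumerates roots of A0
  have hweval : ∀ x : ℂ, A0.charpoly.eval x = ∏ i, (x - w i) := by
    intro x
    have hLHS : Tendsto (fun k => (A (φ k)).charpoly.eval x) atTop (nhds (A0.charpoly.eval x)) := by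
      rw [tendsto_iff_norm_sub_tendsto_zero]
      apply squeeze_zero (fun k => norm_nonneg _)
        (g := fun k => (n.factorial : ℝ) * n * (‖x‖ + CB) ^ (n-1) * opNorm (A (φ k) - A0))
      · intro k
        apply eval_charpoly_lip
        · have := hAk_norm (φ k); linarith [hCB.ge, hCB.le]
        · have := opNorm_nonneg' A0; linarith [hCB.ge, hCB.le]
      · have := hAφ.const_mul ((n.factorial : ℝ) * n * (‖x‖ + CB) ^ (n-1))
        simpa using this
    have hRHS : Tendsto (fun k => (A (φ k)).charpoly.eval x) atTop (nhds (∏ i, (x - w i))) := by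
      have heq : (fun k => (A (φ k)).charpoly.eval x) = fun k => ∏ i, (x - z (φ k) i) := by
        funext k
        exact charpoly_eval_prod (A (φ k)) (z (φ k)) (hz (φ k)) x
      rw [heq]
      apply tendsto_finset_prod
      intro i _
      exact tendsto_const_nhds.sub ((tendsto_pi_nhds.mp hφtend) i)
    exact tendsto_nhds_unique hLHS hRHS
  have hwroots : Multiset.map w Finset.univ.val = A0.charpoly.roots := by
    have hpoly : A0.charpoly = ∏ i, (X - C (w i)) := by
      apply Polynomial.funext
      intro x
      rw [hweval x, Polynomial.eval_prod]
      simp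
    rw [hpoly]
    have : (∏ i, (X - C (w i))) =
        (Multiset.map (fun a => X - C a) (Multiset.map w Finset.univ.val)).prod := by
      rw [Multiset.map_map, Finset.prod_eq_multiset_prod]
      rfl
    rw [this, Polynomial.roots_multiset_prod_X_sub_C]
  -- permutation matching w with lam
  obtain ⟨σ, hσ⟩ := perm_of_map_univ_eq w lam (hwroots.trans hlam.symm)
  -- pick k far enough
  have : ∃ N, ∀ k ≥ N, dist (z (φ k)) w < r := (Metric.tendsto_atTop.mp hφtend) r hr
  obtain ⟨N, hN⟩ := this
  set mu : Fin n → ℂ := fun j => z (φ N) (σ⁻¹ j) with hmu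
  have hmuroots : Multiset.map mu Finset.univ.val = (A (φ N)).charpoly.roots := by
    rw [← hz (φ N)]
    have : Multiset.map mu Finset.univ.val =
        Multiset.map (z (φ N)) (Multiset.map (⇑(σ⁻¹)) Finset.univ.val) := by
      rw [Multiset.map_map]; rfl
    rw [this, Multiset.map_univ_val_equiv]
  obtain ⟨j, hj⟩ := hAfail (φ N) mu hmuroots
  have : ‖mu j - lam j‖ ≤ r := by
    have h1 : lam j = w (σ⁻¹ j) := by
      rw [hσ (σ⁻¹ j)]; simp
    rw [hmu, h1]
    have h2 : dist (z (φ N) (σ⁻¹ j)) (w (σ⁻¹ j)) ≤ dist (z (φ N)) w := dist_le_pi_dist _ _ _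
    rw [Complex.dist_eq] at h2
    exact le_trans h2 (hN N le_rfl).le
  exact absurd hj (not_lt.mpr this)

lemma sep_exists (S : Finset ℂ) : ∃ r : ℝ, 0 < r ∧ r ≤ 1 ∧
    ∀ x ∈ S, ∀ y ∈ S, x ≠ y → 3 * r ≤ ‖x - y‖ := by
  classical
  set T : Finset ℝ := insert 3 (((S ×ˢ S).filter (fun p => p.1 ≠ p.2)).image
    (fun p => ‖p.1 - p.2‖)) with hT
  have hTne : T.Nonempty := ⟨3, Finset.mem_insert_self _ _⟩
  set m := T.min' hTne with hm
  have hmpos : 0 < m := by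
    rw [hm, Finset.lt_min'_iff]
    intro b hb
    rw [hT, Finset.mem_insert] at hb
    rcases hb with rfl | hb
    · norm_num
    · obtain ⟨p, hp, rfl⟩ := Finset.mem_image.mp hb
      have hne : p.1 ≠ p.2 := (Finset.mem_filter.mp hp).2
      have : p.1 - p.2 ≠ 0 := sub_ne_zero.mpr hne
      simpa using (norm_pos_iff.mpr this)
  refine ⟨m / 3, by linarith, ?_, ?_⟩
  · have : m ≤ 3 := Finset.min'_le _ _ (Finset.mem_insert_self _ _)
    linarith
  · intro x hx y hy hxy
    have hmem : ‖x - y‖ ∈ T := by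
      rw [hT, Finset.mem_insert]
      right
      exact Finset.mem_image.mpr ⟨(x, y), Finset.mem_filter.mpr
        ⟨Finset.mem_product.mpr ⟨hx, hy⟩, hxy⟩, rfl⟩
    have := Finset.min'_le _ _ hmem
    linarith

/-- Hölder stability of the eigenvalues (with algebraic multiplicity). -/
theorem eigenvalues_holder_stable {n : ℕ} (A0 : Matrix (Fin n) (Fin n) ℂ) :
    ∃ K > (0 : ℝ), ∃ ε > (0 : ℝ), ∃ lam : Fin n → ℂ,
      Multiset.map lam Finset.univ.val = A0.charpoly.roots ∧
      ∀ A : Matrix (Fin n) (Fin n) ℂ, opNorm (A - A0) < ε →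
        ∃ mu : Fin n → ℂ, Multiset.map mu Finset.univ.val = A.charpoly.roots ∧
          ∀ j, ‖mu j - lam j‖ ≤ K * opNorm (A - A0) ^ ((1 : ℝ) / n) := by
  classical
  obtain ⟨lam, hlam⟩ := exists_enum A0.charpoly.roots (charpoly_card_roots A0)
  obtain ⟨r, hrpos, hr1, hrsep⟩ := sep_exists A0.charpoly.roots.toFinset
  obtain ⟨δ, hδpos, hδ⟩ := qualitative A0 lam hlam hrpos
  set Cc : ℝ := 2 * (opNorm A0 + 1) with hCc
  set L : ℝ := (n.factorial : ℝ) * n * Cc ^ (n - 1) with hL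
  have hLnn : 0 ≤ L := by
    have h0 : (0:ℝ) ≤ Cc := by have := opNorm_nonneg' A0; rw [hCc]; linarith
    rw [hL]; positivity
  set K : ℝ := (L + 1) ^ ((1 : ℝ) / n) with hK
  have hKpos : 0 < K := Real.rpow_pos_of_pos (by linarith) _
  refine ⟨K, hKpos, min δ 1, lt_min hδpos one_pos, lam, hlam, ?_⟩
  intro A hA
  have hAδ : opNorm (A - A0) < δ := lt_of_lt_of_le hA (min_le_left _ _)
  have hA1 : opNorm (A - A0) < 1 := lt_of_lt_of_le hA (min_le_right _ _)
  obtain ⟨mu, hmu, hclose⟩ := hδ A hAδ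
  refine ⟨mu, hmu, ?_⟩
  intro j
  have hn : n ≠ 0 := by rintro rfl; exact j.elim0
  set t : ℝ := opNorm (A - A0) with ht
  have ht0 : 0 ≤ t := opNorm_nonneg' _
  set x : ℂ := mu j with hx
  set a : ℝ := ‖mu j - lam j‖ with ha
  have ha0 : 0 ≤ a := norm_nonneg _
  have har : a ≤ r := hclose j
  -- x is a root of charpoly A
  have hxroot : A.charpoly.eval x = 0 := by
    have : x ∈ A.charpoly.roots := by
      rw [← hmu]; exact Multiset.mem_map.mpr ⟨j, Finset.mem_univ_val _, rfl⟩
    exact Polynomial.isRoot_of_mem_roots this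
  -- |lam i| bounds and |x| bound
  have hlam_mem : ∀ i, lam i ∈ A0.charpoly.roots := by
    intro i
    rw [← hlam]; exact Multiset.mem_map.mpr ⟨i, Finset.mem_univ_val _, rfl⟩
  have hlam_bd : ∀ i, ‖lam i‖ ≤ opNorm A0 := fun i => root_bound A0 (hlam_mem i)
  have hxbd : ‖x‖ ≤ opNorm A0 + 1 := by
    calc ‖x‖ = ‖lam j + (mu j - lam j)‖ := by rw [hx]; ring_nf
      _ ≤ ‖lam j‖ + ‖mu j - lam j‖ := norm_add_le _ _
      _ ≤ opNorm A0 + 1 := add_le_add (hlam_bd j) (le_trans har hr1)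
  -- Lipschitz estimate
  have hev : ‖A0.charpoly.eval x - A.charpoly.eval x‖ ≤ L * t := by
    have h1 : ‖x‖ + opNorm A0 ≤ Cc := by
      have := opNorm_nonneg' A0; rw [hCc]; linarith
    have h2 : ‖x‖ + opNorm A ≤ Cc := by
      have := opNorm_triangle A A0
      rw [hCc]; linarith
    have := eval_charpoly_lip x A0 A h1 h2
    calc ‖A0.charpoly.eval x - A.charpoly.eval x‖
        ≤ (n.factorial : ℝ) * n * Cc ^ (n-1) * opNorm (A0 - A) := this
      _ = L * t := by
          rw [hL, ht]
          congr 1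
          unfold opNorm
          rw [← norm_neg, ← map_neg]
          congr 2
          abel
  have hprod : ∏ i, ‖x - lam i‖ ≤ L * t := by
    have := charpoly_eval_prod A0 lam hlam x
    calc ∏ i, ‖x - lam i‖ = ‖∏ i, (x - lam i)‖ := by
          rw [norm_prod]
      _ = ‖A0.charpoly.eval x - A.charpoly.eval x‖ := by rw [this, hxroot, sub_zero]
      _ ≤ L * t := hev
  -- lower bound the product
  set P : Finset (Fin n) := Finset.univ.filter (fun i => lam i = lam j) with hP
  have hjP : j ∈ P := Finset.mem_filter.mpr ⟨Finset.mem_univ _, rfl⟩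
  have hPprod : ∏ i ∈ P, ‖x - lam i‖ = a ^ P.card := by
    rw [← Finset.prod_const]
    apply Finset.prod_congr rfl
    intro i hi
    rw [ha, hx, (Finset.mem_filter.mp hi).2]
  have hPc : ∀ i ∈ Pᶜ, r ≤ ‖x - lam i‖ := by
    intro i hi
    have hne : lam i ≠ lam j := by
      have := Finset.mem_compl.mp hi
      intro h
      exact this (Finset.mem_filter.mpr ⟨Finset.mem_univ _, h⟩)
    have hsep := hrsep (lam i) (Multiset.mem_toFinset.mpr (hlam_mem i))
      (lam j) (Multiset.mem_toFinset.mpr (hlam_mem j)) hne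
    have htri : ‖lam i - lam j‖ ≤ ‖lam i - x‖ + ‖x - lam j‖ := by
      calc ‖lam i - lam j‖ = ‖(lam i - x) + (x - lam j)‖ := by ring_nf
        _ ≤ _ := norm_add_le _ _
    have hxl : ‖x - lam j‖ = a := by rw [ha, hx]
    have : ‖lam i - x‖ = ‖x - lam i‖ := by
      rw [← norm_neg]; ring_nf
    linarith
  have hPcprod : r ^ (Pᶜ).card ≤ ∏ i ∈ Pᶜ, ‖x - lam i‖ := by
    rw [← Finset.prod_const]
    exact Finset.prod_le_prod (fun _ _ => le_of_lt hrpos) hPc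
  have hsplit : (∏ i ∈ P, ‖x - lam i‖) * ∏ i ∈ Pᶜ, ‖x - lam i‖
      = ∏ i, ‖x - lam i‖ := Finset.prod_mul_prod_compl _ _
  have hcard : P.card + (Pᶜ).card = n := by
    rw [Finset.card_add_card_compl, Fintype.card_fin]
  -- a^n ≤ L*t
  have hkey : a ^ n ≤ (L + 1) * t := by
    have h1 : a ^ n = a ^ P.card * a ^ (Pᶜ).card := by rw [← pow_add, hcard]
    have h2 : a ^ (Pᶜ).card ≤ r ^ (Pᶜ).card := pow_le_pow_left₀ ha0 har _
    have h3 : a ^ P.card * r ^ (Pᶜ).card ≤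
        (∏ i ∈ P, ‖x - lam i‖) * ∏ i ∈ Pᶜ, ‖x - lam i‖ := by
      rw [hPprod]
      exact mul_le_mul_of_nonneg_left hPcprod (by positivity)
    have h4 : a ^ n ≤ L * t := by
      calc a ^ n = a ^ P.card * a ^ (Pᶜ).card := h1
        _ ≤ a ^ P.card * r ^ (Pᶜ).card := mul_le_mul_of_nonneg_left h2 (by positivity)
        _ ≤ _ := h3
        _ = ∏ i, ‖x - lam i‖ := hsplit
        _ ≤ L * t := hprod
    nlinarith
  -- take n-th roots
  have hfin : a ≤ K * t ^ ((1:ℝ)/n) := by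
    have h5 : a = (a ^ n) ^ ((1:ℝ)/n) := by
      rw [← Real.rpow_natCast a n, ← Real.rpow_mul ha0]
      rw [mul_one_div, div_self (by exact_mod_cast hn), Real.rpow_one]
    rw [h5, hK, ← Real.mul_rpow (by linarith) ht0]
    exact Real.rpow_le_rpow (by positivity) hkey (by positivity)
  exact hfin
end

section
/- Let B ∈ ℂ^{n×n} have first column equal to (λ_t, 0, …, 0)^⊤ (so that e_1 is an eigenvector of B for the eigenvalue λ_t), and let C ∈ ℂ^{(n−1)×(n−1)} be the lower-right block of B obtained by deleting the first row and first column. Suppose that e_1 lies at the end of a Jordan chain of B for λ_t of length exactly m, i.e. e_1 ∈ ker(B − λ_t I) ∩ Im((B − λ_t I)^{m−1}) and e_1 ∉ Im((B − λ_t I)^{m}). Then: (a) for every eigenvalue λ_i ≠ λ_t of B and every j ≥ 1, m_j(C, λ_i) = m_j(B, λ_i); and (b) the nonincreasing sequence (m_j(C, λ_t))_{j≥1} is obtained from (m_j(B, λ_t))_{j≥1} by decreasing exactly one entry equal to m by 1 and re-sorting in nonincreasing order. In particular, if l is the least index with m_l(B, λ_t) = m and j* is the greatest such index, then m_j(C,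 λ_t) = m_j(B, λ_t) for j < l and for j > j*, m_j(C, λ_t) = m_{j+1}(B, λ_t) = m for l ≤ j ≤ j* − 1, and m_{j*}(C, λ_t) = m − 1. -/
open scoped Matrix

open Module LinearMap Submodule

section AuxGK

lemma auxGK_finrank_comap {V W : Type*} [AddCommGroup V] [Module ℂ V] [FiniteDimensional ℂ V]
    [AddCommGroup W] [Module ℂ W] (f : V →ₗ[ℂ] W) (U : Submodule ℂ W) :
    finrank ℂ (U.comap f) = finrank ℂ ↥(U ⊓ range f) + finrank ℂ (ker f) := by
  have h := (f.domRestrict (U.comap f)).finrank_range_add_finrank_ker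
  rw [range_domRestrict, ker_domRestrict, Submodule.map_comap_eq] at h
  have hle : ker f ≤ U.comap f := fun x hx => by
    rw [Submodule.mem_comap, LinearMap.mem_ker.mp hx]; exact U.zero_mem
  rw [(Submodule.comapSubtypeEquivOfLe hle).finrank_eq, inf_comm] at h
  omega

lemma auxGK_ker_pow_mono {V : Type*} [AddCommGroup V] [Module ℂ V] (f : Module.End ℂ V)
    {a b : ℕ} (hab : a ≤ b) : ker (f ^ a) ≤ ker (f ^ b) := by
  obtain ⟨c, rfl⟩ := Nat.exists_eq_add_of_le hab
  rw [add_comm, pow_add, Module.End.mul_eq_comp]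
  exact LinearMap.ker_le_ker_comp _ _

lemma auxGK_range_pow_mono {V : Type*} [AddCommGroup V] [Module ℂ V] (f : Module.End ℂ V)
    {a b : ℕ} (hab : a ≤ b) : range (f ^ b) ≤ range (f ^ a) := by
  obtain ⟨c, rfl⟩ := Nat.exists_eq_add_of_le hab
  rw [pow_add, Module.End.mul_eq_comp]
  exact LinearMap.range_comp_le_range _ _

lemma auxGK_second_diff {V : Type*} [AddCommGroup V] [Module ℂ V] [FiniteDimensional ℂ V]
    (f : Module.End ℂ V) (j : ℕ) :
    finrank ℂ (ker (f ^ (j+2))) + finrank ℂ (ker (f ^ j)) ≤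
      2 * finrank ℂ (ker (f ^ (j+1))) := by
  set Q := (ker (f ^ j)).mkQ
  set φ : ker (f ^ (j+2)) →ₗ[ℂ] _ := Q.comp (f.domRestrict (ker (f ^ (j+2))))
  set ψ : ker (f ^ (j+1)) →ₗ[ℂ] _ := Q.comp ((ker (f ^ (j+1))).subtype)
  have hkerφ : ker φ = comap (ker (f ^ (j+2))).subtype (ker (f ^ (j+1))) := by
    ext ⟨x, hx⟩
    simp only [φ, Q, LinearMap.mem_ker, LinearMap.comp_apply, domRestrict_apply,
      Submodule.mkQ_apply, Submodule.Quotient.mk_eq_zero, Submodule.mem_comap,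
      Submodule.coe_subtype, LinearMap.mem_ker]
    rw [pow_succ, Module.End.mul_apply]
  have hkerψ : ker ψ = comap (ker (f ^ (j+1))).subtype (ker (f ^ j)) := by
    ext ⟨x, hx⟩
    simp [φ, ψ, Q, LinearMap.mem_ker, Submodule.Quotient.mk_eq_zero]
  have hrange : range φ ≤ range ψ := by
    rintro y ⟨⟨x, hx⟩, rfl⟩
    have hfx : f x ∈ ker (f ^ (j+1)) := by
      rw [LinearMap.mem_ker, ← Module.End.mul_apply, ← pow_succ]
      exact hx
    exact ⟨⟨f x, hfx⟩, rfl⟩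
  have h1 := φ.finrank_range_add_finrank_ker
  have h2 := ψ.finrank_range_add_finrank_ker
  rw [hkerφ, (Submodule.comapSubtypeEquivOfLe (auxGK_ker_pow_mono f (by omega))).finrank_eq] at h1
  rw [hkerψ, (Submodule.comapSubtypeEquivOfLe (auxGK_ker_pow_mono f (by omega))).finrank_eq] at h2
  have h3 : finrank ℂ (range φ) ≤ finrank ℂ (range ψ) := Submodule.finrank_mono hrange
  omega

lemma auxGK_concave_step (d : ℕ → ℕ) (hsd : ∀ j, d (j+2) + d j ≤ 2 * d (j+1))
    {a b : ℕ} (hab : a ≤ b) : d (b+1) + d a ≤ d (a+1) + d b := by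
  induction b, hab using Nat.le_induction with
  | base => omega
  | succ b hab ih =>
    have h1 := hsd b
    have h2 : d (b+1+1) = d (b+2) := congrArg d (by omega)
    omega

lemma auxGK_toLin'_pow {N : ℕ} (A : Matrix (Fin N) (Fin N) ℂ) (j : ℕ) :
    Matrix.toLin' (A ^ j) = (Matrix.toLin' A) ^ j := by
  induction j with
  | zero => simp [Matrix.toLin'_one, Module.End.one_eq_id]
  | succ j ih => rw [pow_succ, pow_succ, Matrix.toLin'_mul, ih, Module.End.mul_eq_comp]

lemma auxGK_span_inf_mem {V : Type*} [AddCommGroup V] [Module ℂ V] {v : V} (hv : v ≠ 0)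
    (R : Submodule ℂ V) (h : v ∈ R) : finrank ℂ ↥(span ℂ {v} ⊓ R) = 1 := by
  rw [inf_eq_left.mpr ((Submodule.span_singleton_le_iff_mem v R).mpr h)]
  exact finrank_span_singleton hv

lemma auxGK_span_inf_not_mem {V : Type*} [AddCommGroup V] [Module ℂ V] {v : V}
    (R : Submodule ℂ V) (h : v ∉ R) : finrank ℂ ↥(span ℂ {v} ⊓ R) = 0 := by
  have hbot : span ℂ {v} ⊓ R = ⊥ := by
    rw [eq_bot_iff]
    rintro x ⟨hx1, hx2⟩
    obtain ⟨c, rfl⟩ := Submodule.mem_span_singleton.mp hx1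
    rcases eq_or_ne c 0 with rfl | hc
    · simp
    · exact absurd (by simpa [smul_smul, inv_mul_cancel₀ hc] using R.smul_mem c⁻¹ hx2) h
  rw [hbot]
  simp

section Matrices

variable {n : ℕ}

noncomputable def piLGK (n : ℕ) : ((Fin (n+1)) → ℂ) →ₗ[ℂ] (Fin n → ℂ) :=
  LinearMap.funLeft ℂ ℂ Fin.succ

lemma piLGK_surj : Function.Surjective (piLGK n) :=
  LinearMap.funLeft_surjective_of_injective ℂ ℂ _ (Fin.succ_injective n)

lemma auxGK_single_ne_zero : (Pi.single (0 : Fin (n+1)) (1 : ℂ) : Fin (n+1) → ℂ) ≠ 0 := by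
  intro h
  simpa using congrFun h 0

lemma ker_piLGK : ker (piLGK n) = span ℂ {Pi.single (0 : Fin (n+1)) (1 : ℂ)} := by
  ext x
  simp only [LinearMap.mem_ker, Submodule.mem_span_singleton]
  constructor
  · intro hx
    refine ⟨x 0, funext fun i => ?_⟩
    induction i using Fin.cases with
    | zero => simp
    | succ i =>
      have := congrFun hx i
      simp only [piLGK, LinearMap.funLeft_apply] at this
      simp [Pi.single_eq_of_ne (Fin.succ_ne_zero i), this]
  · rintro ⟨c, rfl⟩
    funext i
    simp [piLGK, Pi.single_eq_of_ne (Fin.succ_ne_zero i)]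

variable (B : Matrix (Fin (n + 1)) (Fin (n + 1)) ℂ) (μ : ℂ)

lemma auxGK_intertwine_one (hcol : ∀ i : Fin (n + 1), i ≠ 0 → B i 0 = 0)
    (C : Matrix (Fin n) (Fin n) ℂ) (hC : C = B.submatrix Fin.succ Fin.succ) :
    (piLGK n).comp (Matrix.toLin' (B - μ • 1)) =
      (Matrix.toLin' (C - μ • 1)).comp (piLGK n) := by
  apply LinearMap.ext; intro v
  funext i
  simp only [LinearMap.comp_apply, Matrix.toLin'_apply, piLGK, LinearMap.funLeft_apply]
  show ((B - μ • 1).mulVec v) i.succ = ((C - μ • 1).mulVec (v ∘ Fin.succ)) i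
  simp only [Matrix.mulVec, dotProduct]
  rw [Fin.sum_univ_succ]
  have h0 : (B - μ • 1) i.succ 0 = 0 := by
    simp [Matrix.sub_apply, Matrix.smul_apply, hcol i.succ (Fin.succ_ne_zero i),
      Matrix.one_apply_ne (Fin.succ_ne_zero i)]
  rw [h0, zero_mul, zero_add]
  congr 1
  funext k
  have h1 : (1 : Matrix (Fin (n+1)) (Fin (n+1)) ℂ) i.succ k.succ
      = (1 : Matrix (Fin n) (Fin n) ℂ) i k := by
    simp [Matrix.one_apply, Fin.succ_inj]
  simp [Matrix.sub_apply, Matrix.smul_apply, hC, Matrix.submatrix_apply, h1, Function.comp]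

lemma auxGK_intertwine_pow (hcol : ∀ i : Fin (n + 1), i ≠ 0 → B i 0 = 0)
    (C : Matrix (Fin n) (Fin n) ℂ) (hC : C = B.submatrix Fin.succ Fin.succ) (j : ℕ) :
    (piLGK n).comp ((Matrix.toLin' (B - μ • 1)) ^ j) =
      ((Matrix.toLin' (C - μ • 1)) ^ j).comp (piLGK n) := by
  induction j with
  | zero => simp [Module.End.one_eq_id]
  | succ j ih =>
    rw [pow_succ, pow_succ, Module.End.mul_eq_comp, Module.End.mul_eq_comp,
      ← LinearMap.comp_assoc, ih, LinearMap.comp_assoc, auxGK_intertwine_one B μ hcol C hC,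
      ← LinearMap.comp_assoc]

end Matrices

end AuxGK


lemma auxGK_key {n : ℕ} (B : Matrix (Fin (n + 1)) (Fin (n + 1)) ℂ)
    (hcol : ∀ i : Fin (n + 1), i ≠ 0 → B i 0 = 0)
    (C : Matrix (Fin n) (Fin n) ℂ) (hC : C = B.submatrix Fin.succ Fin.succ) (μ : ℂ) (j : ℕ) :
    kerDim C μ j + 1 = kerDim B μ j +
      finrank ℂ ↥(span ℂ {(Pi.single 0 1 : Fin (n+1) → ℂ)} ⊓
        range ((Matrix.toLin' (B - μ • 1)) ^ j)) := by
  have hKC : kerDim C μ j = finrank ℂ (ker ((Matrix.toLin' (C - μ • 1)) ^ j)) := by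
    unfold kerDim; rw [auxGK_toLin'_pow]
  have hKB : kerDim B μ j = finrank ℂ (ker ((Matrix.toLin' (B - μ • 1)) ^ j)) := by
    unfold kerDim; rw [auxGK_toLin'_pow]
  have h1 := auxGK_finrank_comap (piLGK n) (ker ((Matrix.toLin' (C - μ • 1)) ^ j))
  have hsurj : range (piLGK n) = ⊤ := range_eq_top.mpr piLGK_surj
  have hkspan : finrank ℂ ↥(span ℂ {(Pi.single 0 1 : Fin (n+1) → ℂ)}) = 1 :=
    finrank_span_singleton auxGK_single_ne_zero
  have h2 : comap (piLGK n) (ker ((Matrix.toLin' (C - μ • 1)) ^ j)) =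
      comap ((Matrix.toLin' (B - μ • 1)) ^ j) (ker (piLGK n)) := by
    rw [← LinearMap.ker_comp, ← LinearMap.ker_comp, auxGK_intertwine_pow B μ hcol C hC]
  have h3 := auxGK_finrank_comap ((Matrix.toLin' (B - μ • 1)) ^ j) (ker (piLGK n))
  rw [hsurj, inf_top_eq, h2, h3, ker_piLGK] at h1
  rw [hKC, hKB]
  omega

/-- the effect of truncating the first row and column (along an eigenvector
`e₁` ending a Jordan chain of length exactly `m` at `λ_t`) on the Jordan block sizes. -/
theorem gk_numbers_of_truncation {n : ℕ} (B : Matrix (Fin (n + 1)) (Fin (n + 1)) ℂ)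
    (lamt : ℂ) (m : ℕ) (hm : 1 ≤ m)
    (hdiag : B 0 0 = lamt) (hcol : ∀ i : Fin (n + 1), i ≠ 0 → B i 0 = 0)
    (hker : Matrix.toLin' (B - lamt • 1) (Pi.single 0 1) = 0)
    (hchain : Pi.single (0 : Fin (n + 1)) (1 : ℂ) ∈
      LinearMap.range (Matrix.toLin' ((B - lamt • 1) ^ (m - 1))))
    (hmax : Pi.single (0 : Fin (n + 1)) (1 : ℂ) ∉
      LinearMap.range (Matrix.toLin' ((B - lamt • 1) ^ m)))
    (C : Matrix (Fin n) (Fin n) ℂ) (hC : C = B.submatrix Fin.succ Fin.succ) :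
    -- (a) the block sizes at every other eigenvalue are unchanged
    (∀ μ : ℂ, μ ≠ lamt → ∀ j : ℕ, 1 ≤ j → gkLocal C μ j = gkLocal B μ j) ∧
    -- (b) at `λ_t`, one entry equal to `m` drops by `1` and the list is re-sorted:
    -- if `l` is the least and `jstar` the greatest index `j ≥ 1` with `m_j(B, λ_t) = m`, then
    (∀ l jstar : ℕ, 1 ≤ l →
      gkLocal B lamt l = m → gkLocal B lamt jstar = m →
      (∀ j : ℕ, 1 ≤ j → gkLocal B lamt j = m → l ≤ j ∧ j ≤ jstar) →
      (∀ j : ℕ, 1 ≤ j → j < l → gkLocal C lamt j = gkLocal B lamt j) ∧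
      (∀ j : ℕ, jstar < j → gkLocal C lamt j = gkLocal B lamt j) ∧
      (∀ j : ℕ, l ≤ j → j ≤ jstar - 1 → gkLocal C lamt j = gkLocal B lamt (j + 1) ∧
        gkLocal C lamt j = m) ∧
      gkLocal C lamt jstar = m - 1) := by
  classical
  rw [auxGK_toLin'_pow] at hchain hmax
  -- basic rewrites
  have hKB : ∀ (μ : ℂ) (j : ℕ),
      kerDim B μ j = finrank ℂ (ker ((Matrix.toLin' (B - μ • 1)) ^ j)) := by
    intro μ j; unfold kerDim; rw [auxGK_toLin'_pow]
  have hKC : ∀ (μ : ℂ) (j : ℕ),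
      kerDim C μ j = finrank ℂ (ker ((Matrix.toLin' (C - μ • 1)) ^ j)) := by
    intro μ j; unfold kerDim; rw [auxGK_toLin'_pow]
  have hBmono : ∀ (μ : ℂ) (a b : ℕ), a ≤ b → kerDim B μ a ≤ kerDim B μ b := by
    intro μ a b hab
    rw [hKB, hKB]
    exact Submodule.finrank_mono (auxGK_ker_pow_mono _ hab)
  have hCmono : ∀ (μ : ℂ) (a b : ℕ), a ≤ b → kerDim C μ a ≤ kerDim C μ b := by
    intro μ a b hab
    rw [hKC, hKC]
    exact Submodule.finrank_mono (auxGK_ker_pow_mono _ hab)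
  have hfrC : finrank ℂ (Fin n → ℂ) = n := by simp
  have hfrB : finrank ℂ (Fin (n+1) → ℂ) = n + 1 := by simp
  have hstabC : ∀ μ : ℂ, kerDim C μ (n+1) = kerDim C μ n := by
    intro μ
    rw [hKC, hKC]
    have h := Module.End.ker_pow_eq_ker_pow_finrank_of_le
      (f := Matrix.toLin' (C - μ • 1)) (m := n+1) (by rw [hfrC]; omega)
    rw [hfrC] at h
    rw [h]
  -- eigenvector facts
  have hBe1 : Matrix.toLin' B (Pi.single 0 1 : Fin (n+1) → ℂ)
      = lamt • (Pi.single 0 1 : Fin (n+1) → ℂ) := by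
    have h0 := hker
    rw [map_sub, LinearMap.sub_apply, map_smul, Matrix.toLin'_one, LinearMap.smul_apply,
      LinearMap.id_apply, sub_eq_zero] at h0
    exact h0
  have hfe1 : ∀ μ : ℂ, Matrix.toLin' (B - μ • 1) (Pi.single 0 1 : Fin (n+1) → ℂ)
      = (lamt - μ) • (Pi.single 0 1 : Fin (n+1) → ℂ) := by
    intro μ
    rw [map_sub, LinearMap.sub_apply, map_smul, Matrix.toLin'_one, LinearMap.smul_apply,
      LinearMap.id_apply, hBe1, sub_smul]
  have hfe1pow : ∀ (μ : ℂ) (j : ℕ),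
      ((Matrix.toLin' (B - μ • 1)) ^ j) (Pi.single 0 1 : Fin (n+1) → ℂ)
        = (lamt - μ) ^ j • (Pi.single 0 1 : Fin (n+1) → ℂ) := by
    intro μ j
    induction j with
    | zero => simp
    | succ j ih =>
      rw [pow_succ, Module.End.mul_apply, hfe1, map_smul, ih, smul_smul, ← pow_succ']
  have hmem_ne : ∀ μ : ℂ, μ ≠ lamt → ∀ j : ℕ,
      (Pi.single 0 1 : Fin (n+1) → ℂ) ∈ range ((Matrix.toLin' (B - μ • 1)) ^ j) := by
    intro μ hμ j
    have hc : (lamt - μ) ≠ 0 := sub_ne_zero.mpr (Ne.symm hμ)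
    refine ⟨((lamt - μ) ^ j)⁻¹ • (Pi.single 0 1 : Fin (n+1) → ℂ), ?_⟩
    rw [map_smul, hfe1pow, smul_smul, inv_mul_cancel₀ (pow_ne_zero _ hc), one_smul]
  have hmem_lo : ∀ j : ℕ, j < m →
      (Pi.single 0 1 : Fin (n+1) → ℂ) ∈ range ((Matrix.toLin' (B - lamt • 1)) ^ j) :=
    fun j hj => auxGK_range_pow_mono _ (show j ≤ m - 1 by omega) hchain
  have hmem_hi : ∀ j : ℕ, m ≤ j →
      (Pi.single 0 1 : Fin (n+1) → ℂ) ∉ range ((Matrix.toLin' (B - lamt • 1)) ^ j) :=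
    fun j hj h => hmax (auxGK_range_pow_mono _ hj h)
  -- kernel dimension relations
  have key := fun (μ : ℂ) (j : ℕ) => auxGK_key B hcol C hC μ j
  have hA : ∀ μ : ℂ, μ ≠ lamt → ∀ j : ℕ, kerDim C μ j = kerDim B μ j := by
    intro μ hμ j
    have h := key μ j
    rw [auxGK_span_inf_mem auxGK_single_ne_zero _ (hmem_ne μ hμ j)] at h
    omega
  have hD'lo : ∀ j : ℕ, j < m → kerDim C lamt j = kerDim B lamt j := by
    intro j hj
    have h := key lamt j
    rw [auxGK_span_inf_mem auxGK_single_ne_zero _ (hmem_lo j hj)] at h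
    omega
  have hD'hi : ∀ j : ℕ, m ≤ j → kerDim C lamt j + 1 = kerDim B lamt j := by
    intro j hj
    have h := key lamt j
    rw [auxGK_span_inf_not_mem _ (hmem_hi j hj)] at h
    omega
  have hIcc : Finset.Icc 1 (n+1) = insert (n+1) (Finset.Icc 1 n) := by
    ext x; simp only [Finset.mem_Icc, Finset.mem_insert]; omega
  -- part (a)
  have partA : ∀ μ : ℂ, μ ≠ lamt → ∀ i : ℕ, 1 ≤ i → gkLocal C μ i = gkLocal B μ i := by
    intro μ hμ i hi
    unfold gkLocal
    simp only [hA μ hμ]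
    rw [hIcc, Finset.filter_insert]
    split_ifs with hcond
    · exfalso
      simp only [Nat.add_sub_cancel] at hcond
      have e1 : kerDim B μ (n+1) = kerDim B μ n := by
        rw [← hA μ hμ, ← hA μ hμ, hstabC]
      omega
    · rfl
  refine ⟨partA, ?_⟩
  -- part (b)
  intro l jstar hl h2 h3 h4
  set em := kerDim B lamt m - kerDim B lamt (m-1) with hem_def
  have hm_lt : kerDim B lamt (m-1) < kerDim B lamt m := by
    by_contra hle
    push_neg at hle
    have heq : kerDim B lamt (m-1) = kerDim B lamt m :=
      le_antisymm (hBmono lamt _ _ (by omega)) hle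
    have hrn1 := ((Matrix.toLin' (B - lamt • 1)) ^ m).finrank_range_add_finrank_ker
    have hrn2 := ((Matrix.toLin' (B - lamt • 1)) ^ (m-1)).finrank_range_add_finrank_ker
    rw [← hKB] at hrn1 hrn2
    have hfle : finrank ℂ (range ((Matrix.toLin' (B - lamt • 1)) ^ (m-1)))
        ≤ finrank ℂ (range ((Matrix.toLin' (B - lamt • 1)) ^ m)) := by omega
    have hreq := Submodule.eq_of_le_of_finrank_le
      (auxGK_range_pow_mono _ (show m - 1 ≤ m by omega)) hfle
    exact hmax (hreq ▸ hchain)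
  have hem1 : 1 ≤ em := by omega
  have hm_le : m ≤ n + 1 := by
    by_contra h
    push_neg at h
    have h1 := Module.End.ker_pow_eq_ker_pow_finrank_of_le
      (f := Matrix.toLin' (B - lamt • 1)) (m := m) (by rw [hfrB]; omega)
    have h2' := Module.End.ker_pow_eq_ker_pow_finrank_of_le
      (f := Matrix.toLin' (B - lamt • 1)) (m := m - 1) (by rw [hfrB]; omega)
    have : kerDim B lamt (m-1) = kerDim B lamt m := by rw [hKB, hKB, h1, h2']
    omega
  -- concavity / antitone block counts
  have hconc : ∀ j : ℕ, kerDim B lamt (j+2) + kerDim B lamt j ≤ 2 * kerDim B lamt (j+1) := by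
    intro j
    simp only [hKB]
    exact auxGK_second_diff _ j
  have hanti : ∀ a b : ℕ, 1 ≤ a → a ≤ b →
      kerDim B lamt b + kerDim B lamt (a-1) ≤ kerDim B lamt a + kerDim B lamt (b-1) := by
    intro a b ha hab
    have h := auxGK_concave_step (fun k => kerDim B lamt k) hconc
      (a := a-1) (b := b-1) (by omega)
    simp only [show a-1+1 = a by omega, show b-1+1 = b by omega] at h
    exact h
  -- difference relations
  have hstep : ∀ j : ℕ, j ≠ m →
      kerDim B lamt j - kerDim B lamt (j-1) = kerDim C lamt j - kerDim C lamt (j-1) := by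
    intro j hj
    rcases lt_or_gt_of_ne hj with h | h
    · rw [hD'lo j h, hD'lo (j-1) (by omega)]
    · have a1 := hD'hi j (by omega)
      have a2 := hD'hi (j-1) (by omega)
      omega
  have hstepm : em = (kerDim C lamt m - kerDim C lamt (m-1)) + 1 := by
    have a1 := hD'hi m le_rfl
    have a2 := hD'lo (m-1) (by omega)
    have a3 : kerDim C lamt (m-1) ≤ kerDim C lamt m := hCmono lamt _ _ (by omega)
    omega
  -- G over the big interval
  have hGext : ∀ i : ℕ, 1 ≤ i → gkLocal C lamt i =
      ((Finset.Icc 1 (n+1)).filter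
        (fun j => i ≤ kerDim C lamt j - kerDim C lamt (j - 1))).card := by
    intro i hi
    unfold gkLocal
    rw [hIcc, Finset.filter_insert]
    split_ifs with hcond
    · exfalso
      simp only [Nat.add_sub_cancel] at hcond
      have := hstabC lamt
      omega
    · rfl
  have hFG_ne : ∀ i : ℕ, 1 ≤ i → i ≠ em → gkLocal C lamt i = gkLocal B lamt i := by
    intro i hi hne
    rw [hGext i hi]
    unfold gkLocal
    congr 1
    apply Finset.filter_congr
    intro j hj
    rcases eq_or_ne j m with rfl | hjm
    · have := hstepm
      constructor <;> intro <;> omega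
    · have := hstep j hjm
      constructor <;> intro <;> omega
  have hFG_eq : gkLocal C lamt em + 1 = gkLocal B lamt em := by
    rw [hGext em hem1]
    unfold gkLocal
    have hsplit : (Finset.Icc 1 (n+1)).filter
          (fun j => em ≤ kerDim B lamt j - kerDim B lamt (j - 1))
        = insert m ((Finset.Icc 1 (n+1)).filter
          (fun j => em ≤ kerDim C lamt j - kerDim C lamt (j - 1))) := by
      ext j
      simp only [Finset.mem_filter, Finset.mem_insert, Finset.mem_Icc]
      constructor
      · rintro ⟨hj, hp⟩
        rcases eq_or_ne j m with rfl | hjm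
        · exact Or.inl rfl
        · exact Or.inr ⟨hj, by have := hstep j hjm; omega⟩
      · rintro (rfl | ⟨hj, hp⟩)
        · exact ⟨⟨hm, hm_le⟩, le_refl _⟩
        · rcases eq_or_ne j m with rfl | hjm
          · exact ⟨hj, le_refl _⟩
          · exact ⟨hj, by have := hstep j hjm; omega⟩
    rw [hsplit, Finset.card_insert_of_notMem]
    simp only [Finset.mem_filter, Finset.mem_Icc, not_and]
    intro _
    omega
  have hFanti : ∀ i i' : ℕ, i ≤ i' → gkLocal B lamt i' ≤ gkLocal B lamt i := by
    intro i i' h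
    unfold gkLocal
    apply Finset.card_le_card
    intro j hj
    simp only [Finset.mem_filter] at hj ⊢
    exact ⟨hj.1, le_trans h hj.2⟩
  have hkey1 : ∀ i : ℕ, 1 ≤ i → m ≤ gkLocal B lamt i → i ≤ em := by
    intro i hi hFi
    by_contra hlt
    push_neg at hlt
    have hsub : (Finset.Icc 1 (n+1)).filter
          (fun j => i ≤ kerDim B lamt j - kerDim B lamt (j - 1)) ⊆ Finset.Icc 1 (m-1) := by
      intro j hj
      simp only [Finset.mem_filter, Finset.mem_Icc] at hj ⊢
      refine ⟨hj.1.1, ?_⟩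
      by_contra hjm
      push_neg at hjm
      have h5 := hanti m j hm (by omega)
      have h6 : kerDim B lamt (j-1) ≤ kerDim B lamt j := hBmono lamt _ _ (by omega)
      have h7 := hj.2
      omega
    have hc := Finset.card_le_card hsub
    rw [Nat.card_Icc] at hc
    unfold gkLocal at hFi
    omega
  have hkey2 : m ≤ gkLocal B lamt em := by
    unfold gkLocal
    have hsub : Finset.Icc 1 m ⊆ (Finset.Icc 1 (n+1)).filter
        (fun j => em ≤ kerDim B lamt j - kerDim B lamt (j - 1)) := by
      intro j hj
      simp only [Finset.mem_Icc] at hj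
      simp only [Finset.mem_filter, Finset.mem_Icc]
      refine ⟨⟨hj.1, by omega⟩, ?_⟩
      have h5 := hanti j m hj.1 hj.2
      have h6 : kerDim B lamt (j-1) ≤ kerDim B lamt j := hBmono lamt _ _ (by omega)
      have h7 : kerDim B lamt (m-1) ≤ kerDim B lamt m := hBmono lamt _ _ (by omega)
      omega
    have hc := Finset.card_le_card hsub
    rw [Nat.card_Icc] at hc
    omega
  have hjl : l ≤ jstar := (h4 l hl h2).2
  have hjstar1 : 1 ≤ jstar := le_trans hl hjl
  have hje : jstar ≤ em := hkey1 jstar hjstar1 (le_of_eq h3.symm)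
  have hFem : gkLocal B lamt em = m := by
    have a := hFanti jstar em hje
    omega
  have hej : em ≤ jstar := (h4 em hem1 hFem).2
  have hemstar : em = jstar := le_antisymm hej hje
  refine ⟨?_, ?_, ?_, ?_⟩
  · intro j hj1 hjl'
    exact hFG_ne j hj1 (by omega)
  · intro j hj
    exact hFG_ne j (by omega) (by omega)
  · intro j hjl' hjle
    have hj1 : 1 ≤ j := le_trans hl hjl'
    have hGj : gkLocal C lamt j = gkLocal B lamt j := hFG_ne j hj1 (by omega)
    have hFj : gkLocal B lamt j = m := by
      have a := hFanti l j hjl'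
      have b := hFanti j jstar (by omega)
      omega
    have hFj1 : gkLocal B lamt (j+1) = m := by
      have a := hFanti l (j+1) (by omega)
      have b := hFanti (j+1) jstar (by omega)
      omega
    exact ⟨by rw [hGj, hFj, hFj1], by rw [hGj, hFj]⟩
  · have h9 := hFG_eq
    rw [hemstar] at h9 hFem
    omega
end
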